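/- Let N be a binomial random variable with parameters n ≥ 1 and p ∈ (0,1]. Then E[1/(N - 1/2) | N > 0] ≤ 1/(np) + 9/(np)^2. -/
import Mathlib

open Finset

private lemma bin_sum (m : ℕ) (p q : ℝ) (h : p + q = 1) :
    ∑ k ∈ range (m+1), (m.choose k : ℝ) * p^k * q^(m-k) = 1 := by
  have h2 := add_pow p q m
  rw [h, one_pow] at h2
  rw [h2]
  exact Finset.sum_congr rfl fun k _ => by ring

private lemma sum_Icc_one (f : ℕ → ℝ) (n : ℕ) :
    ∑ k ∈ Icc 1 n, f k = ∑ k ∈ range n, f (k+1) := by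
  rw [← Finset.Ico_add_one_right_eq_Icc, Finset.sum_Ico_eq_sum_range]
  norm_num
  exact Finset.sum_congr rfl fun i _ => by rw [Nat.add_comm]

private lemma L1 (n : ℕ) (p q : ℝ) (h : p + q = 1) :
    ∑ k ∈ range (n+1), (((n+1).choose (k+1)) : ℝ) * p^(k+1) * q^(n-k) = 1 - q^(n+1) := by
  have h2 := bin_sum (n+1) p q h
  rw [Finset.sum_range_succ'] at h2
  simp only [Nat.succ_sub_succ, Nat.choose_zero_right, pow_zero, Nat.sub_zero, Nat.cast_one,
    one_mul, mul_one] at h2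
  linarith

private lemma L2 (n : ℕ) (p q : ℝ) (h : p + q = 1) :
    ∑ k ∈ range (n+1), (((n+2).choose (k+2)) : ℝ) * p^(k+2) * q^(n-k)
      = 1 - q^(n+2) - (n+2)*p*q^(n+1) := by
  have h2 := bin_sum (n+2) p q h
  rw [Finset.sum_range_succ', Finset.sum_range_succ'] at h2
  simp only [zero_add, Nat.succ_sub_succ, Nat.choose_zero_right, Nat.choose_one_right, pow_zero,
    pow_one, Nat.sub_zero, Nat.cast_one, Nat.cast_add, Nat.cast_ofNat, one_mul, mul_one] at h2
  rw [show (∑ x ∈ range (n+1), (((n+2).choose (x+1+1)) : ℝ) * p ^ (x+1+1) * q ^ (n - x))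
      = ∑ k ∈ range (n+1), (((n+2).choose (k+2)) : ℝ) * p ^ (k+2) * q ^ (n - k)
    from Finset.sum_congr rfl fun x _ => rfl] at h2
  -- (cast forms already match)
  linarith

private lemma choose2 (n k : ℕ) :
    (n+1)*(n+2) * n.choose k = (n+2).choose (k+2) * ((k+1)*(k+2)) := by
  have a := Nat.add_one_mul_choose_eq n k
  have b := Nat.add_one_mul_choose_eq (n+1) (k+1)
  calc (n+1)*(n+2) * n.choose k = (n+2)*((n+1)*n.choose k) := by ring
    _ = (n+2)*((n+1).choose (k+1)*(k+1)) := by rw [a]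
    _ = ((n+2)*(n+1).choose (k+1))*(k+1) := by ring
    _ = ((n+2).choose (k+2)*(k+2))*(k+1) := by rw [b]
    _ = (n+2).choose (k+2) * ((k+1)*(k+2)) := by ring

open Finset in
/-- For `N ~ Binomial(n, p)` with `n ≥ 1` and `p ∈ (0,1]`,
`E[1/(N - 1/2) | N > 0] ≤ 1/(np) + 9/(np)²`. -/
theorem stmt_1 (n : ℕ) (hn : 1 ≤ n) (p : ℝ) (hp : 0 < p) (hp1 : p ≤ 1) :
    (∑ k ∈ Finset.Icc 1 n,
        (n.choose k : ℝ) * p ^ k * (1 - p) ^ (n - k) * (1 / ((k : ℝ) - 1/2)))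
      / (1 - (1 - p) ^ n)
    ≤ 1 / (n * p) + 9 / (n * p) ^ 2 := by
  set q : ℝ := 1 - p with hqdef
  have hpq : p + q = 1 := by rw [hqdef]; ring
  have hq0 : 0 ≤ q := by rw [hqdef]; linarith
  have hq1 : q < 1 := by rw [hqdef]; linarith
  have hn1 : (1:ℝ) ≤ n := by exact_mod_cast hn
  have hqn0 : 0 ≤ q ^ n := pow_nonneg hq0 n
  have hqn : q ^ n < 1 := pow_lt_one₀ hq0 hq1 (by omega)
  have hD : 0 < 1 - q ^ n := by linarith
  have hnp : (0:ℝ) < (n:ℝ) * p := by positivity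
  set f : ℕ → ℝ := fun k => (n.choose k : ℝ) * p ^ k * q ^ (n - k) with hf
  have hf0 : ∀ k, 0 ≤ f k := fun k => by
    apply mul_nonneg (mul_nonneg (by positivity) (by positivity)) (by positivity)
  set T1 : ℝ := ∑ k ∈ Icc 1 n, f k * (1/((k:ℝ)+1)) with hT1def
  set T2 : ℝ := ∑ k ∈ Icc 1 n, f k * (1/(((k:ℝ)+1)*((k:ℝ)+2))) with hT2def
  -- Step A : termwise bound
  have hA : (∑ k ∈ Finset.Icc 1 n, f k * (1 / ((k : ℝ) - 1/2))) ≤ T1 + 9 * T2 := by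
    rw [hT1def, hT2def, Finset.mul_sum, ← Finset.sum_add_distrib]
    apply Finset.sum_le_sum
    intro k hk
    have hk1 : (1:ℝ) ≤ k := by
      have := (Finset.mem_Icc.mp hk).1
      exact_mod_cast this
    have h1 : (0:ℝ) < (k:ℝ) - 1/2 := by linarith
    have h2 : (0:ℝ) < (k:ℝ) + 1 := by linarith
    have h3 : (0:ℝ) < (k:ℝ) + 2 := by linarith
    have key : 1/((k:ℝ)-1/2) ≤ 1/((k:ℝ)+1) + 9*(1/(((k:ℝ)+1)*((k:ℝ)+2))) := by
      rw [div_le_iff₀ h1]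
      have e : (1/((k:ℝ)+1) + 9*(1/(((k:ℝ)+1)*((k:ℝ)+2)))) * ((k:ℝ)-1/2)
          = (((k:ℝ)+11)*((k:ℝ)-1/2))/(((k:ℝ)+1)*((k:ℝ)+2)) := by
        field_simp
        ring
      rw [e, le_div_iff₀ (by positivity)]
      nlinarith
    calc f k * (1/((k:ℝ)-1/2)) ≤ f k * (1/((k:ℝ)+1) + 9*(1/(((k:ℝ)+1)*((k:ℝ)+2)))) :=
          mul_le_mul_of_nonneg_left key (hf0 k)
      _ = f k * (1/((k:ℝ)+1)) + 9 * (f k * (1/(((k:ℝ)+1)*((k:ℝ)+2)))) := by ring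
  -- identity for T1
  have e1 : ((n:ℝ)+1) * p * T1 = 1 - q^(n+1) - ((n:ℝ)+1)*p*q^n := by
    rw [hT1def, Finset.mul_sum]
    have step : ∀ k ∈ Icc 1 n,
        ((n:ℝ)+1) * p * (f k * (1/((k:ℝ)+1)))
          = (((n+1).choose (k+1)) : ℝ) * p^(k+1) * q^(n-k) := by
      intro k _
      have hc : ((n:ℝ)+1) * (n.choose k : ℝ) = (((n+1).choose (k+1)) : ℝ) * ((k:ℝ)+1) := by
        exact_mod_cast Nat.add_one_mul_choose_eq n k
      have hk : ((k:ℝ)+1) ≠ 0 := by positivity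
      rw [hf]
      field_simp
      linear_combination (p^(k+1) * q^(n-k)) * hc
    rw [Finset.sum_congr rfl step,
      sum_Icc_one (fun k => (((n+1).choose (k+1)) : ℝ) * p^(k+1) * q^(n-k)) n]
    have hr := L1 n p q hpq
    rw [Finset.sum_range_succ'] at hr
    simp only [zero_add, Nat.sub_zero, Nat.choose_one_right, pow_one, Nat.cast_add,
      Nat.cast_one] at hr
    linarith
  -- identity for T2
  have e2 : ((n:ℝ)+1) * ((n:ℝ)+2) * p^2 * T2
      = 1 - q^(n+2) - ((n:ℝ)+2)*p*q^(n+1) - ((n:ℝ)+1)*((n:ℝ)+2)*p^2*q^n/2 := by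
    rw [hT2def, Finset.mul_sum]
    have step : ∀ k ∈ Icc 1 n,
        ((n:ℝ)+1) * ((n:ℝ)+2) * p^2 * (f k * (1/(((k:ℝ)+1)*((k:ℝ)+2))))
          = (((n+2).choose (k+2)) : ℝ) * p^(k+2) * q^(n-k) := by
      intro k _
      have hc : ((n:ℝ)+1) * ((n:ℝ)+2) * (n.choose k : ℝ)
          = (((n+2).choose (k+2)) : ℝ) * (((k:ℝ)+1)*((k:ℝ)+2)) := by
        exact_mod_cast choose2 n k
      have hk1 : ((k:ℝ)+1) ≠ 0 := by positivity
      have hk2 : ((k:ℝ)+2) ≠ 0 := by positivity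
      rw [hf]
      field_simp
      linear_combination (p^(k+2) * q^(n-k)) * hc
    rw [Finset.sum_congr rfl step,
      sum_Icc_one (fun k => (((n+2).choose (k+2)) : ℝ) * p^(k+2) * q^(n-k)) n]
    have hr := L2 n p q hpq
    rw [Finset.sum_range_succ'] at hr
    simp only [zero_add, Nat.sub_zero] at hr
    have hN : (n+1)*(n+2) = (n+2).choose 2 * 2 := by
      have := choose2 n 0
      norm_num at this
      omega
    have hc0 : (((n+2).choose 2 : ℕ) : ℝ) * 2 = ((n:ℝ)+1)*((n:ℝ)+2) := by
      exact_mod_cast hN.symm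
    have e0 : (((n+2).choose 2 : ℕ) : ℝ) * p^2 * q^n = ((n:ℝ)+1)*((n:ℝ)+2)*p^2*q^n/2 := by
      linear_combination (p^2 * q^n / 2) * hc0
    rw [e0] at hr
    linarith
  -- bounds
  have hT1 : T1 ≤ (1 - q^n) / (((n:ℝ)+1) * p) := by
    rw [le_div_iff₀ (by positivity), mul_comm]
    rw [e1]
    have epow : q^(n+1) = q^n * q := pow_succ q n
    rw [epow, hqdef]
    nlinarith [mul_nonneg hp.le hqn0, mul_le_mul_of_nonneg_right hn1 (mul_nonneg hp.le hqn0)]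
  have hT2 : T2 ≤ (1 - q^n) / (((n:ℝ)+1) * ((n:ℝ)+2) * p^2) := by
    rw [le_div_iff₀ (by positivity), mul_comm, e2]
    have key : 1 - q^2 - ((n:ℝ)+2)*p*q - ((n:ℝ)+1)*((n:ℝ)+2)*p^2/2 ≤ 0 := by
      rw [hqdef]
      nlinarith [sq_nonneg p,
        mul_nonneg (mul_nonneg hp.le hp.le) (by linarith : (0:ℝ) ≤ (n:ℝ) - 1)]
    have h3 : q^n * (1 - q^2 - ((n:ℝ)+2)*p*q - ((n:ℝ)+1)*((n:ℝ)+2)*p^2/2) ≤ 0 :=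
      mul_nonpos_of_nonneg_of_nonpos hqn0 key
    have ea : q^(n+1) = q^n * q := pow_succ q n
    have eb : q^(n+2) = q^n * q^2 := by rw [pow_add]
    rw [ea, eb, ← sub_nonpos]
    rw [show (1 - q^n*q^2 - ((n:ℝ)+2)*p*(q^n*q) - ((n:ℝ)+1)*((n:ℝ)+2)*p^2*q^n/2) - (1 - q^n)
        = q^n * (1 - q^2 - ((n:ℝ)+2)*p*q - ((n:ℝ)+1)*((n:ℝ)+2)*p^2/2) from by ring]
    exact h3
  -- final assembly
  have h1b : 1/(((n:ℝ)+1)*p) ≤ 1/((n:ℝ)*p) := by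
    apply one_div_le_one_div_of_le hnp
    exact mul_le_mul_of_nonneg_right (by linarith) hp.le
  have h2b : 1/(((n:ℝ)+1)*((n:ℝ)+2)*p^2) ≤ 1/(((n:ℝ)*p)^2) := by
    apply one_div_le_one_div_of_le (by positivity)
    rw [mul_pow]
    apply mul_le_mul_of_nonneg_right _ (sq_nonneg p)
    linarith
  have hS : (∑ k ∈ Finset.Icc 1 n, f k * (1 / ((k : ℝ) - 1/2)))
      ≤ (1 - q^n) * (1/((n:ℝ)*p) + 9*(1/(((n:ℝ)*p)^2))) := by
    calc (∑ k ∈ Finset.Icc 1 n, f k * (1 / ((k : ℝ) - 1/2))) ≤ T1 + 9 * T2 := hA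
      _ ≤ (1 - q^n) / (((n:ℝ)+1) * p) + 9 * ((1 - q^n) / (((n:ℝ)+1) * ((n:ℝ)+2) * p^2)) := by
          gcongr
      _ = (1 - q^n) * (1/(((n:ℝ)+1)*p) + 9*(1/(((n:ℝ)+1)*((n:ℝ)+2)*p^2))) := by ring
      _ ≤ (1 - q^n) * (1/((n:ℝ)*p) + 9*(1/(((n:ℝ)*p)^2))) := by
          apply mul_le_mul_of_nonneg_left _ hD.le
          linarith
  rw [div_le_iff₀ hD]
  calc (∑ k ∈ Finset.Icc 1 n, f k * (1 / ((k : ℝ) - 1/2)))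
      ≤ (1 - q^n) * (1/((n:ℝ)*p) + 9*(1/(((n:ℝ)*p)^2))) := hS
    _ = (1 / ((n:ℝ) * p) + 9 / ((n:ℝ) * p) ^ 2) * (1 - q^n) := by ring
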